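/- A vector θ* ∈ ℝ^n is the unique minimizer of the ℓ1 problem (i.e., ‖φ(θ*)‖₁ < ‖φ(θ)‖₁ for all θ ≠ θ*) if and only if there exist real numbers λ_t ∈ [−1, 1], t ∈ I⁰(θ*), such that Σ_{t ∈ I⁺(θ*)} x_t − Σ_{t ∈ I⁻(θ*)} x_t = Σ_{t ∈ I⁰(θ*)} λ_t x_t and rank(X_S) = n, where S = {t ∈ I⁰(θ*) : |λ_t| < 1}. -/

import Mathlib

open Matrix Finset
open scoped RealInnerProductSpace

/-- The `n × |S|` submatrix of the regressor matrix `X` formed by the columns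
(regressors) indexed by the finite set `S`. -/
noncomputable def colSub (n N : ℕ) (x : Fin N → Fin n → ℝ) (S : Finset (Fin N)) :
    Matrix (Fin n) {t // t ∈ S} ℝ :=
  Matrix.of fun i t => x t.1 i


theorem myFarkas {κ ι : Type*} [Fintype κ] [DecidableEq ι] (G : Finset ι) :
    ∀ (z : ι → κ → ℝ) (b : κ → ℝ),
    (∃ w : ι → ℝ, (∀ t, 0 ≤ w t) ∧ ∑ t ∈ G, w t • z t = b) ∨
    (∃ v : κ → ℝ, (∀ t ∈ G, z t ⬝ᵥ v ≤ 0) ∧ 0 < b ⬝ᵥ v) := by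
  induction G using Finset.induction with
  | empty =>
    intro z b
    by_cases hb : b = 0
    · exact Or.inl ⟨0, fun t => le_rfl, by simp [hb]⟩
    · refine Or.inr ⟨b, by simp, ?_⟩
      have h0 : (0:ℝ) ≤ b ⬝ᵥ b := Finset.sum_nonneg fun i _ => mul_self_nonneg _
      rcases h0.lt_or_eq with h | h
      · exact h
      · exact absurd (dotProduct_self_eq_zero.mp h.symm) hb
  | @insert a G' ha IH =>
    intro z b
    rcases IH z b with ⟨w, hw, hsum⟩ | ⟨v, hv, hbv⟩
    · exact Or.inl ⟨Function.update w a 0, fun t => by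
        rcases eq_or_ne t a with rfl | h
        · simp
        · simp [Function.update_of_ne h, hw t],
        by rw [Finset.sum_insert ha]
           rw [Function.update_self]
           rw [show (∑ t ∈ G', Function.update w a 0 t • z t) = ∑ t ∈ G', w t • z t from
             Finset.sum_congr rfl fun t ht => by
               rw [Function.update_of_ne (by rintro rfl; exact ha ht)]]
           simpa using hsum⟩
    · by_cases hav : z a ⬝ᵥ v ≤ 0
      · exact Or.inr ⟨v, fun t ht => by
          rcases Finset.mem_insert.mp ht with rfl | ht
          · exact hav
          · exact hv t ht, hbv⟩
      · push_neg at hav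
        have hqpos : 0 < z a ⬝ᵥ v := hav
        set q : ℝ := z a ⬝ᵥ v with hq
        rcases IH (fun t => z t - ((z t ⬝ᵥ v) / q) • z a) (b - ((b ⬝ᵥ v) / q) • z a)
          with ⟨w, hw, hsum⟩ | ⟨v', hv', hbv'⟩
        · -- reconstruct a solution for the bigger system
          set γ : ℝ := (b ⬝ᵥ v - ∑ t ∈ G', w t * (z t ⬝ᵥ v)) / q with hγ
          have hγnn : 0 ≤ γ := by
            apply div_nonneg _ hqpos.le
            have : ∑ t ∈ G', w t * (z t ⬝ᵥ v) ≤ 0 :=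
              Finset.sum_nonpos fun t ht => mul_nonpos_of_nonneg_of_nonpos (hw t) (hv t ht)
            linarith
          have e1 : ∑ t ∈ G', w t • (z t - ((z t ⬝ᵥ v)/q) • z a)
              = (∑ t ∈ G', w t • z t) - ((∑ t ∈ G', w t * (z t ⬝ᵥ v))/q) • z a := by
            rw [Finset.sum_div, Finset.sum_smul, ← Finset.sum_sub_distrib]
            refine Finset.sum_congr rfl fun t ht => ?_
            rw [smul_sub, smul_smul, mul_div_assoc]
          rw [e1, sub_eq_iff_eq_add] at hsum
          refine Or.inl ⟨Function.update w a γ, fun t => by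
            rcases eq_or_ne t a with rfl | h
            · simpa using hγnn
            · simp [Function.update_of_ne h, hw t], ?_⟩
          rw [Finset.sum_insert ha, Function.update_self,
            show (∑ t ∈ G', Function.update w a γ t • z t) = ∑ t ∈ G', w t • z t from
              Finset.sum_congr rfl fun t ht => by
                rw [Function.update_of_ne (by rintro rfl; exact ha ht)]]
          rw [hsum, hγ, sub_div]
          module
        · refine Or.inr ⟨v' - ((z a ⬝ᵥ v')/q) • v, fun t ht => ?_, ?_⟩
          · rcases Finset.mem_insert.mp ht with rfl | ht
            · have hz : z t ⬝ᵥ (v' - ((z t ⬝ᵥ v')/q) • v) = 0 := by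
                rw [dotProduct_sub, dotProduct_smul, smul_eq_mul]
                field_simp
                rw [← hq, sub_self, mul_zero, mul_zero]
              exact le_of_eq hz
            · have h1 := hv' t ht
              simp only [sub_dotProduct, smul_dotProduct, smul_eq_mul] at h1
              rw [dotProduct_sub, dotProduct_smul, smul_eq_mul]
              have h2 : z t ⬝ᵥ v' - (z a ⬝ᵥ v')/q * (z t ⬝ᵥ v)
                  = z t ⬝ᵥ v' - (z t ⬝ᵥ v)/q * (z a ⬝ᵥ v') := by ring
              linarith [h2 ▸ h1]
          · have h1 := hbv'
            simp only [sub_dotProduct, smul_dotProduct, smul_eq_mul] at h1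
            rw [dotProduct_sub, dotProduct_smul, smul_eq_mul]
            have h2 : b ⬝ᵥ v' - (z a ⬝ᵥ v')/q * (b ⬝ᵥ v)
                = b ⬝ᵥ v' - (b ⬝ᵥ v)/q * (z a ⬝ᵥ v') := by ring
            linarith [h2 ▸ h1]


lemma range_colSub_transpose (n N : ℕ) (x : Fin N → Fin n → ℝ) (S : Finset (Fin N)) :
    Set.range (colSub n N x S)ᵀ = x '' ↑S := by
  ext v
  constructor
  · rintro ⟨t, rfl⟩
    exact ⟨t.1, t.2, rfl⟩
  · rintro ⟨t, ht, rfl⟩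
    exact ⟨⟨t, ht⟩, rfl⟩

lemma rank_colSub_iff (n N : ℕ) (x : Fin N → Fin n → ℝ) (S : Finset (Fin N)) :
    (colSub n N x S).rank = n ↔ Submodule.span ℝ (x '' ↑S) = ⊤ := by
  rw [Matrix.rank, Matrix.range_mulVecLin,
    show Set.range (colSub n N x S).col = x '' ↑S from range_colSub_transpose n N x S]
  constructor
  · intro h
    apply Submodule.eq_top_of_finrank_eq
    rw [h, Module.finrank_fin_fun]
  · intro h
    rw [h, finrank_top, Module.finrank_fin_fun]

lemma dot_eq_zero_of_span_top (n N : ℕ) (x : Fin N → Fin n → ℝ) (S : Finset (Fin N))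
    (h : Submodule.span ℝ (x '' ↑S) = ⊤) (d : Fin n → ℝ)
    (hd : ∀ t ∈ S, x t ⬝ᵥ d = 0) : d = 0 := by
  have hdd : ∀ v ∈ Submodule.span ℝ (x '' (↑S : Set (Fin N))), v ⬝ᵥ d = 0 := by
    intro v hv
    induction hv using Submodule.span_induction with
    | mem v hv => obtain ⟨t, ht, rfl⟩ := hv; exact hd t ht
    | zero => simp
    | add u v _ _ hu hv => rw [add_dotProduct, hu, hv, add_zero]
    | smul c v _ hv => rw [smul_dotProduct, hv, smul_zero]
  have : d ⬝ᵥ d = 0 := hdd d (by rw [h]; trivial)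
  exact dotProduct_self_eq_zero.mp this

lemma exists_dot_zero_of_span_ne_top (n N : ℕ) (x : Fin N → Fin n → ℝ) (S : Finset (Fin N))
    (h : Submodule.span ℝ (x '' ↑S) ≠ ⊤) :
    ∃ d : Fin n → ℝ, d ≠ 0 ∧ ∀ t ∈ S, x t ⬝ᵥ d = 0 := by
  let e : (Fin n → ℝ) ≃ₗ[ℝ] EuclideanSpace ℝ (Fin n) := (WithLp.linearEquiv 2 ℝ (Fin n → ℝ)).symm
  let V : Submodule ℝ (EuclideanSpace ℝ (Fin n)) := (Submodule.span ℝ (x '' ↑S)).map (e : (Fin n → ℝ) →ₗ[ℝ] EuclideanSpace ℝ (Fin n))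
  have hV : Vᗮ ≠ ⊥ := by
    intro hbot
    exact h ((Submodule.map_eq_top_iff (e := e)).mp (Submodule.orthogonal_eq_bot_iff.mp hbot))
  obtain ⟨d, hdmem, hd0⟩ := Submodule.exists_mem_ne_zero_of_ne_bot hV
  refine ⟨d.ofLp, fun h' => hd0 (by simpa using congrArg (WithLp.toLp 2) h'), fun t ht => ?_⟩
  have hmem : e (x t) ∈ V := Submodule.mem_map_of_mem (Submodule.subset_span ⟨t, ht, rfl⟩)
  have h0 := (Submodule.mem_orthogonal V d).mp hdmem _ hmem
  simpa [e, PiLp.inner_apply, RCLike.inner_apply, dotProduct, mul_comm] using h0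

lemma sum_dot {n : ℕ} {ι : Type*} (s : Finset ι) (v : ι → Fin n → ℝ) (w : Fin n → ℝ) :
    (∑ i ∈ s, v i) ⬝ᵥ w = ∑ i ∈ s, v i ⬝ᵥ w := by
  simp only [dotProduct, Finset.sum_apply, Finset.sum_mul]
  rw [Finset.sum_comm]

noncomputable def cvec (n N : ℕ) (x : Fin N → Fin n → ℝ) (y : Fin N → ℝ) (θs : Fin n → ℝ) :
    Fin n → ℝ :=
  (∑ t ∈ univ.filter (fun t => x t ⬝ᵥ θs > y t), x t)
    - ∑ t ∈ univ.filter (fun t => x t ⬝ᵥ θs < y t), x t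

noncomputable def gfun (n N : ℕ) (x : Fin N → Fin n → ℝ) (y : Fin N → ℝ) (θs : Fin n → ℝ)
    (d : Fin n → ℝ) : ℝ :=
  cvec n N x y θs ⬝ᵥ d + ∑ t ∈ univ.filter (fun t => x t ⬝ᵥ θs = y t), |x t ⬝ᵥ d|

lemma sum_ite_eq_g (n N : ℕ) (x : Fin N → Fin n → ℝ) (y : Fin N → ℝ) (θs : Fin n → ℝ)
    (d : Fin n → ℝ) :
    ∑ t, (if x t ⬝ᵥ θs = y t then |x t ⬝ᵥ d|
      else if x t ⬝ᵥ θs > y t then x t ⬝ᵥ d else -(x t ⬝ᵥ d))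
      = gfun n N x y θs d := by
  rw [Finset.sum_ite, Finset.sum_ite]
  have h1 : (univ.filter (fun t => ¬ x t ⬝ᵥ θs = y t)).filter (fun t => x t ⬝ᵥ θs > y t)
      = univ.filter (fun t => x t ⬝ᵥ θs > y t) := by
    rw [Finset.filter_filter]
    exact Finset.filter_congr fun t _ => ⟨fun h => h.2, fun h => ⟨ne_of_gt h, h⟩⟩
  have h2 : (univ.filter (fun t => ¬ x t ⬝ᵥ θs = y t)).filter (fun t => ¬ x t ⬝ᵥ θs > y t)
      = univ.filter (fun t => x t ⬝ᵥ θs < y t) := by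
    rw [Finset.filter_filter]
    exact Finset.filter_congr fun t _ =>
      ⟨fun h => lt_of_le_of_ne (not_lt.mp h.2) h.1, fun h => ⟨ne_of_lt h, not_lt_of_gt h⟩⟩
  rw [h1, h2, gfun, cvec, sub_dotProduct, sum_dot, sum_dot, Finset.sum_neg_distrib]
  ring

lemma lb (n N : ℕ) (x : Fin N → Fin n → ℝ) (y : Fin N → ℝ) (θs : Fin n → ℝ) (θ : Fin n → ℝ) :
    (∑ t, |y t - x t ⬝ᵥ θs|) + gfun n N x y θs (θ - θs) ≤ ∑ t, |y t - x t ⬝ᵥ θ| := by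
  rw [← sum_ite_eq_g, ← Finset.sum_add_distrib]
  refine Finset.sum_le_sum fun t _ => ?_
  have hxθ : y t - x t ⬝ᵥ θ = (y t - x t ⬝ᵥ θs) - x t ⬝ᵥ (θ - θs) := by
    rw [dotProduct_sub]; ring
  rw [hxθ]
  set φ := y t - x t ⬝ᵥ θs with hφdef
  set a := x t ⬝ᵥ (θ - θs) with hadef
  split_ifs with hc1 hc2
  · have : φ = 0 := by rw [hφdef, hc1, sub_self]
    simp [this]
  · have hφ : φ < 0 := by rw [hφdef]; linarith
    have := neg_le_abs (φ - a)
    rw [abs_of_neg hφ]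
    linarith
  · have hφ : 0 < φ := by
      rw [hφdef]
      rcases lt_trichotomy (x t ⬝ᵥ θs) (y t) with h | h | h
      · linarith
      · exact absurd h hc1
      · exact absurd h hc2
    have := le_abs_self (φ - a)
    rw [abs_of_pos hφ]
    linarith

lemma ub (n N : ℕ) (x : Fin N → Fin n → ℝ) (y : Fin N → ℝ) (θs : Fin n → ℝ) (d : Fin n → ℝ) :
    ∃ ε : ℝ, 0 < ε ∧
      ∑ t, |y t - x t ⬝ᵥ (θs + ε • d)| ≤ (∑ t, |y t - x t ⬝ᵥ θs|) + ε * gfun n N x y θs d := by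
  classical
  set F := univ.filter (fun t : Fin N => ¬ x t ⬝ᵥ θs = y t) with hF
  have hex : ∃ ε : ℝ, 0 < ε ∧ ∀ t, x t ⬝ᵥ θs ≠ y t → ε * |x t ⬝ᵥ d| ≤ |y t - x t ⬝ᵥ θs| := by
    by_cases hFne : F.Nonempty
    · refine ⟨F.inf' hFne (fun t => |y t - x t ⬝ᵥ θs| / (|x t ⬝ᵥ d| + 1)), ?_, ?_⟩
      · rw [Finset.lt_inf'_iff]
        intro t ht
        have htne : x t ⬝ᵥ θs ≠ y t := by
          simpa [hF] using (Finset.mem_filter.mp ht).2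
        have hnum : 0 < |y t - x t ⬝ᵥ θs| :=
          abs_pos.mpr (sub_ne_zero.mpr fun h => htne h.symm)
        positivity
      · intro t htne
        have htF : t ∈ F := by simp [hF, htne]
        have hle : F.inf' hFne (fun t => |y t - x t ⬝ᵥ θs| / (|x t ⬝ᵥ d| + 1))
            ≤ |y t - x t ⬝ᵥ θs| / (|x t ⬝ᵥ d| + 1) := Finset.inf'_le _ htF
        have hpos : (0:ℝ) < |x t ⬝ᵥ d| + 1 := by positivity
        have hεpos : 0 < F.inf' hFne (fun t => |y t - x t ⬝ᵥ θs| / (|x t ⬝ᵥ d| + 1)) := by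
          rw [Finset.lt_inf'_iff]
          intro s hs
          have hsne : x s ⬝ᵥ θs ≠ y s := by
            simpa [hF] using (Finset.mem_filter.mp hs).2
          have : 0 < |y s - x s ⬝ᵥ θs| :=
            abs_pos.mpr (sub_ne_zero.mpr fun h => hsne h.symm)
          positivity
        calc F.inf' hFne (fun t => |y t - x t ⬝ᵥ θs| / (|x t ⬝ᵥ d| + 1)) * |x t ⬝ᵥ d|
            ≤ (|y t - x t ⬝ᵥ θs| / (|x t ⬝ᵥ d| + 1)) * (|x t ⬝ᵥ d| + 1) := by
              apply mul_le_mul hle (by linarith) (abs_nonneg _) (by positivity)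
          _ = |y t - x t ⬝ᵥ θs| := div_mul_cancel₀ _ hpos.ne'
    · refine ⟨1, one_pos, fun t htne => ?_⟩
      exfalso
      exact hFne ⟨t, by simp [hF, htne]⟩
  obtain ⟨ε, hε, hkey⟩ := hex
  refine ⟨ε, hε, ?_⟩
  rw [← sum_ite_eq_g, Finset.mul_sum, ← Finset.sum_add_distrib]
  refine Finset.sum_le_sum fun t _ => ?_
  have hxθ : y t - x t ⬝ᵥ (θs + ε • d) = (y t - x t ⬝ᵥ θs) - ε * (x t ⬝ᵥ d) := by
    rw [dotProduct_add, dotProduct_smul, smul_eq_mul]; ring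
  rw [hxθ]
  set φ := y t - x t ⬝ᵥ θs with hφdef
  set a := x t ⬝ᵥ d with hadef
  have hmul1 : ε * -|a| ≤ ε * a := mul_le_mul_of_nonneg_left (neg_abs_le a) hε.le
  have hmul2 : ε * a ≤ ε * |a| := mul_le_mul_of_nonneg_left (le_abs_self a) hε.le
  split_ifs with hc1 hc2
  · have hz : φ = 0 := by rw [hφdef, hc1, sub_self]
    rw [hz, zero_sub, abs_neg, abs_mul, abs_of_pos hε]
    simp
  · have hφ : φ < 0 := by rw [hφdef]; linarith
    have hk : ε * |a| ≤ |φ| := hkey t (fun h => hc1 h)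
    rw [abs_of_neg hφ] at hk
    have hle : φ - ε * a ≤ 0 := by linarith
    rw [abs_of_nonpos hle, abs_of_neg hφ]
    linarith
  · have hφ : 0 < φ := by
      rw [hφdef]
      rcases lt_trichotomy (x t ⬝ᵥ θs) (y t) with h | h | h
      · linarith
      · exact absurd h hc1
      · exact absurd h hc2
    have hk : ε * |a| ≤ |φ| := hkey t (fun h => hc1 h)
    rw [abs_of_pos hφ] at hk
    have hle : 0 ≤ φ - ε * a := by linarith
    rw [abs_of_nonneg hle, abs_of_pos hφ]
    linarith

lemma gpos (n N : ℕ) (x : Fin N → Fin n → ℝ) (y : Fin N → ℝ) (θs : Fin n → ℝ)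
    (huniq : ∀ θ : Fin n → ℝ, θ ≠ θs → ∑ t, |y t - x t ⬝ᵥ θs| < ∑ t, |y t - x t ⬝ᵥ θ|)
    (d : Fin n → ℝ) (hd : d ≠ 0) : 0 < gfun n N x y θs d := by
  obtain ⟨ε, hε, hub⟩ := ub n N x y θs d
  have hne : θs + ε • d ≠ θs := by
    intro h
    have h2 : ε • d = 0 := by
      have := congrArg (fun u => u - θs) h
      simpa using this
    rcases smul_eq_zero.mp h2 with h3 | h3
    · exact hε.ne' h3
    · exact hd h3
  have := huniq _ hne
  nlinarith

lemma exists_feasible {n N : ℕ} (x : Fin N → Fin n → ℝ) (y : Fin N → ℝ) (θs : Fin n → ℝ)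
    (hg : ∀ d : Fin n → ℝ, d ≠ 0 → 0 < gfun n N x y θs d) :
    ∃ lam : Fin N → ℝ,
      (∀ t ∈ univ.filter (fun t => x t ⬝ᵥ θs = y t), |lam t| ≤ 1) ∧
      cvec n N x y θs = ∑ t ∈ univ.filter (fun t => x t ⬝ᵥ θs = y t), lam t • x t := by
  classical
  set I0 := univ.filter (fun t : Fin N => x t ⬝ᵥ θs = y t) with hI0
  set z : (Fin N ⊕ (Fin N ⊕ Fin N)) → (Fin n ⊕ Fin N) → ℝ :=
    Sum.elim (fun t => Sum.elim (x t) (Pi.single t 1))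
      (Sum.elim (fun t => Sum.elim (-(x t)) (Pi.single t 1))
        (fun t => Sum.elim 0 (Pi.single t 1))) with hz
  set b : (Fin n ⊕ Fin N) → ℝ :=
    Sum.elim (cvec n N x y θs) (fun t => if t ∈ I0 then (1:ℝ) else 0) with hb
  set G : Finset (Fin N ⊕ (Fin N ⊕ Fin N)) := I0.disjSum (I0.disjSum I0) with hG
  rcases myFarkas G z b with ⟨w, hw, hsum⟩ | ⟨v, hvle, hvpos⟩
  · -- construct lam
    refine ⟨fun t => w (Sum.inl t) - w (Sum.inr (Sum.inl t)), ?_, ?_⟩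
    · intro t ht
      show |w (Sum.inl t) - w (Sum.inr (Sum.inl t))| ≤ 1
      have hcomp := congrFun hsum (Sum.inr t)
      simp only [hG, Finset.sum_apply, Finset.sum_disjSum, Pi.smul_apply, smul_eq_mul,
        hz, Sum.elim_inl, Sum.elim_inr, hb, Pi.single_apply] at hcomp
      simp only [mul_ite, mul_one, mul_zero, Finset.sum_ite_eq, ht, if_true] at hcomp
      have h1 : 0 ≤ w (Sum.inl t) := hw _
      have h2 : 0 ≤ w (Sum.inr (Sum.inl t)) := hw _
      have h3 : 0 ≤ w (Sum.inr (Sum.inr t)) := hw _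
      rw [abs_le]
      constructor <;> linarith
    · funext i
      have hcomp := congrFun hsum (Sum.inl i)
      simp only [hG, Finset.sum_apply, Finset.sum_disjSum, Pi.smul_apply, smul_eq_mul,
        hz, Sum.elim_inl, Sum.elim_inr, hb, Pi.neg_apply, Pi.zero_apply, mul_zero,
        mul_neg, Finset.sum_const_zero, add_zero, Finset.sum_neg_distrib] at hcomp
      rw [Finset.sum_apply]
      simp only [Pi.smul_apply, smul_eq_mul, sub_mul]
      rw [Finset.sum_sub_distrib]
      linarith [hcomp]
  · -- contradiction with hg
    exfalso
    set u : Fin n → ℝ := fun i => v (Sum.inl i) with hu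
    set s : Fin N → ℝ := fun t => v (Sum.inr t) with hs
    have hdot : ∀ t : Fin N, ∀ c : Fin n → ℝ,
        (Sum.elim c (Pi.single t 1) : (Fin n ⊕ Fin N) → ℝ) ⬝ᵥ v = c ⬝ᵥ u + s t := by
      intro t c
      rw [dotProduct, Fintype.sum_sum_type]
      simp only [Sum.elim_inl, Sum.elim_inr, Pi.single_apply, ite_mul, one_mul, zero_mul]
      rw [Finset.sum_ite_eq' univ t (fun j => v (Sum.inr j))]
      simp [dotProduct, hu, hs]
    have h1 : ∀ t ∈ I0, x t ⬝ᵥ u + s t ≤ 0 := by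
      intro t ht
      have := hvle (Sum.inl t) (by simp [hG, ht])
      rwa [hz, Sum.elim_inl, hdot] at this
    have h2 : ∀ t ∈ I0, -(x t ⬝ᵥ u) + s t ≤ 0 := by
      intro t ht
      have := hvle (Sum.inr (Sum.inl t)) (by simp [hG, ht])
      rw [hz, Sum.elim_inr, Sum.elim_inl, hdot] at this
      rwa [neg_dotProduct] at this
    have h3 : ∀ t ∈ I0, s t ≤ 0 := by
      intro t ht
      have := hvle (Sum.inr (Sum.inr t)) (by simp [hG, ht])
      rw [hz, Sum.elim_inr, Sum.elim_inr, hdot, zero_dotProduct, zero_add] at this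
      exact this
    have hbv : b ⬝ᵥ v = cvec n N x y θs ⬝ᵥ u + ∑ t ∈ I0, s t := by
      rw [hb, dotProduct, Fintype.sum_sum_type]
      simp only [Sum.elim_inl, Sum.elim_inr, ite_mul, one_mul, zero_mul]
      rw [Finset.sum_ite_mem]
      simp [dotProduct, hu, hs, Finset.univ_inter]
    rw [hbv] at hvpos
    have hune : u ≠ 0 := by
      intro h0
      rw [h0, dotProduct_zero] at hvpos
      have : ∑ t ∈ I0, s t ≤ 0 := Finset.sum_nonpos h3
      linarith
    have hgneg : gfun n N x y θs (-u) < 0 := by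
      rw [gfun, dotProduct_neg]
      have habs : ∀ t ∈ I0, |x t ⬝ᵥ (-u)| ≤ -(s t) := by
        intro t ht
        rw [dotProduct_neg, abs_neg, abs_le]
        exact ⟨by linarith [h2 t ht], by linarith [h1 t ht]⟩
      have : ∑ t ∈ I0, |x t ⬝ᵥ (-u)| ≤ ∑ t ∈ I0, -(s t) := Finset.sum_le_sum habs
      rw [Finset.sum_neg_distrib] at this
      linarith
    have := hg (-u) (by simpa using hune)
    linarith

lemma forward_span (n N : ℕ) (hn : 1 ≤ n) (x : Fin N → Fin n → ℝ) (y : Fin N → ℝ)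
    (θs : Fin n → ℝ)
    (hg : ∀ d : Fin n → ℝ, d ≠ 0 → 0 < gfun n N x y θs d) :
    ∃ lam : Fin N → ℝ,
      (∀ t ∈ univ.filter (fun t => x t ⬝ᵥ θs = y t), |lam t| ≤ 1) ∧
      cvec n N x y θs = ∑ t ∈ univ.filter (fun t => x t ⬝ᵥ θs = y t), lam t • x t ∧
      Submodule.span ℝ
        (x '' ↑((univ.filter (fun t => x t ⬝ᵥ θs = y t)).filter (fun t => |lam t| < 1))) = ⊤ := by
  classical
  set I0 : Finset (Fin N) := univ.filter (fun t => x t ⬝ᵥ θs = y t) with hI0def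
  set c : Fin n → ℝ := cvec n N x y θs with hcdef
  set Feas : (Fin N → ℝ) → Prop :=
    fun μ => (∀ t ∈ I0, |μ t| ≤ 1) ∧ c = ∑ t ∈ I0, μ t • x t with hFeasdef
  obtain ⟨lam0, hlam0a, hlam0b⟩ := exists_feasible x y θs hg
  have hFeas0 : Feas lam0 := ⟨hlam0a, hlam0b⟩
  set Free : Fin N → Prop := fun t => ∃ μ, Feas μ ∧ |μ t| < 1 with hFreedef
  -- I0 is nonempty
  have hI0ne : I0.Nonempty := by
    by_contra hne
    rw [Finset.not_nonempty_iff_eq_empty] at hne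
    set d : Fin n → ℝ := Pi.single ⟨0, hn⟩ 1 with hddef
    have hd : d ≠ 0 := by
      intro h
      have := congrFun h ⟨0, hn⟩
      simp [hddef] at this
    have h1 := hg d hd
    have h2 := hg (-d) (by simpa using hd)
    rw [gfun] at h1 h2
    rw [← hI0def, hne] at h1 h2
    rw [Finset.sum_empty] at h1 h2
    rw [dotProduct_neg] at h2
    rw [← hcdef] at h1 h2
    linarith
  -- witness choice
  set μc : Fin N → (Fin N → ℝ) := fun t => if h : Free t then h.choose else lam0 with hμcdef
  have hμcF : ∀ t, Feas (μc t) := by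
    intro t
    by_cases h : Free t
    · simp only [hμcdef, dif_pos h]
      exact h.choose_spec.1
    · simp only [hμcdef, dif_neg h]
      exact hFeas0
  have hμcLt : ∀ t, Free t → |μc t t| < 1 := by
    intro t h
    simp only [hμcdef, dif_pos h]
    exact h.choose_spec.2
  set K : ℝ := (I0.card : ℝ) with hKdef
  have hK : 0 < K := by
    rw [hKdef]
    exact_mod_cast Finset.card_pos.mpr hI0ne
  set lam : Fin N → ℝ := fun s => (∑ t ∈ I0, μc t s) / K with hlamdef
  -- lam is feasible
  have hlam_bdd : ∀ s ∈ I0, |lam s| ≤ 1 := by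
    intro s hs
    have h1 : |∑ t ∈ I0, μc t s| ≤ ∑ t ∈ I0, |μc t s| := Finset.abs_sum_le_sum_abs _ _
    have h2 : ∑ t ∈ I0, |μc t s| ≤ ∑ t ∈ I0, (1:ℝ) :=
      Finset.sum_le_sum fun t _ => (hμcF t).1 s hs
    rw [Finset.sum_const, nsmul_eq_mul, mul_one] at h2
    rw [hlamdef]
    rw [abs_div, abs_of_pos hK, div_le_one hK]
    exact h1.trans h2
  have hlam_eq : c = ∑ s ∈ I0, lam s • x s := by
    have step : ∑ s ∈ I0, lam s • x s = K⁻¹ • ∑ s ∈ I0, ∑ t ∈ I0, μc t s • x s := by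
      rw [Finset.smul_sum]
      refine Finset.sum_congr rfl fun s _ => ?_
      show ((∑ t ∈ I0, μc t s) / K) • x s = K⁻¹ • ∑ t ∈ I0, μc t s • x s
      rw [div_eq_inv_mul, ← smul_smul, Finset.sum_smul]
    rw [step, Finset.sum_comm]
    have step2 : ∀ t ∈ I0, ∑ s ∈ I0, μc t s • x s = c := fun t _ => ((hμcF t).2).symm
    rw [Finset.sum_congr rfl step2, Finset.sum_const, ← Nat.cast_smul_eq_nsmul ℝ, smul_smul,
      ← hKdef, inv_mul_cancel₀ hK.ne', one_smul]
  have hFeaslam : Feas lam := ⟨hlam_bdd, hlam_eq⟩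
  have hiff : ∀ s, |lam s| < 1 → Free s := fun s h => ⟨lam, hFeaslam, h⟩
  have hiff' : ∀ s ∈ I0, Free s → |lam s| < 1 := by
    intro s hs hfree
    have h1 : |∑ t ∈ I0, μc t s| ≤ ∑ t ∈ I0, |μc t s| := Finset.abs_sum_le_sum_abs _ _
    have h2 : ∑ t ∈ I0, |μc t s| < ∑ t ∈ I0, (1:ℝ) := by
      refine Finset.sum_lt_sum (fun t _ => (hμcF t).1 s hs) ⟨s, hs, hμcLt s hfree⟩
    rw [Finset.sum_const, nsmul_eq_mul, mul_one] at h2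
    rw [hlamdef, abs_div, abs_of_pos hK, div_lt_one hK]
    exact h1.trans_lt h2
  refine ⟨lam, hlam_bdd, hlam_eq, ?_⟩
  -- the span condition
  by_contra hspan
  set S : Finset (Fin N) := I0.filter (fun t => |lam t| < 1) with hSdef
  set T : Finset (Fin N) := I0.filter (fun t => ¬ |lam t| < 1) with hTdef
  obtain ⟨d, hd0, hdS⟩ := exists_dot_zero_of_span_ne_top n N x S hspan
  -- decomposition of gfun along d
  have hsplit : ∀ e : Fin n → ℝ,
      gfun n N x y θs e = ∑ u ∈ S, (lam u * (x u ⬝ᵥ e) + |x u ⬝ᵥ e|)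
        + ∑ u ∈ T, (lam u * (x u ⬝ᵥ e) + |x u ⬝ᵥ e|) := by
    intro e
    rw [gfun, ← hI0def, ← hcdef, hlam_eq, sum_dot]
    simp only [smul_dotProduct, smul_eq_mul]
    rw [← Finset.sum_add_distrib, hSdef, hTdef, Finset.sum_filter_add_sum_filter_not]
  have hT1 : ∀ t ∈ T, |lam t| = 1 := by
    intro t ht
    have h1 := hlam_bdd t (Finset.mem_of_mem_filter t ht)
    have h2 : ¬ |lam t| < 1 := (Finset.mem_filter.mp ht).2
    linarith [not_lt.mp h2]
  -- find t⁺
  have hgd := hg d hd0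
  rw [hsplit d] at hgd
  have hSzero : ∑ u ∈ S, (lam u * (x u ⬝ᵥ d) + |x u ⬝ᵥ d|) = 0 := by
    refine Finset.sum_eq_zero fun u hu => ?_
    rw [hdS u hu]
    simp
  rw [hSzero, zero_add] at hgd
  obtain ⟨tp, htpT, htp⟩ : ∃ t ∈ T, 0 < lam t * (x t ⬝ᵥ d) + |x t ⬝ᵥ d| := by
    by_contra hcon
    push_neg at hcon
    have : ∑ u ∈ T, (lam u * (x u ⬝ᵥ d) + |x u ⬝ᵥ d|) ≤ 0 := Finset.sum_nonpos hcon
    linarith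
  have htpI0 : tp ∈ I0 := Finset.mem_of_mem_filter tp htpT
  have habs_tp : |lam tp * (x tp ⬝ᵥ d)| = |x tp ⬝ᵥ d| := by
    rw [abs_mul, hT1 tp htpT, one_mul]
  have htp_pos : 0 < |x tp ⬝ᵥ d| := by
    rcases abs_cases (lam tp * (x tp ⬝ᵥ d)) with ⟨h, _⟩ | ⟨h, _⟩
    · nlinarith [abs_nonneg (x tp ⬝ᵥ d)]
    · rw [habs_tp] at h
      linarith
  -- second Farkas application
  set z2 : (Fin N ⊕ (Fin N ⊕ Fin N)) → Fin n → ℝ :=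
    Sum.elim (fun t => lam t • x t) (Sum.elim x (fun s => -(x s))) with hz2
  set b2 : Fin n → ℝ := -(lam tp • x tp) with hb2
  set G2 : Finset (Fin N ⊕ (Fin N ⊕ Fin N)) := T.disjSum (S.disjSum S) with hG2
  rcases myFarkas G2 z2 b2 with ⟨w, hw, hsum2⟩ | ⟨v, hvle, hvpos⟩
  · -- perturbation contradicts maximality
    set p : Fin N → ℝ := fun t => w (Sum.inl t) with hpdef
    set ν : Fin N → ℝ := fun s =>
      if s ∈ T then (p s + if s = tp then 1 else 0) * lam s
      else w (Sum.inr (Sum.inl s)) - w (Sum.inr (Sum.inr s)) with hνdef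
    have hsum2' : ∑ t ∈ T, p t • (lam t • x t)
        + (∑ s ∈ S, w (Sum.inr (Sum.inl s)) • x s
          + ∑ s ∈ S, w (Sum.inr (Sum.inr s)) • (-(x s))) = -(lam tp • x tp) := by
      rw [← hb2, ← hsum2, hG2, Finset.sum_disjSum, Finset.sum_disjSum]
      simp only [hz2, Sum.elim_inl, Sum.elim_inr, hpdef]
    have hSnotT : ∀ s ∈ S, s ∉ T := by
      intro s hs hsT
      exact (Finset.mem_filter.mp hsT).2 (Finset.mem_filter.mp hs).2
    have hν0 : ∑ s ∈ I0, ν s • x s = 0 := by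
      rw [← Finset.sum_filter_add_sum_filter_not I0 (fun t => |lam t| < 1) (fun s => ν s • x s),
        ← hSdef, ← hTdef]
      have hSpart : ∑ s ∈ S, ν s • x s
          = ∑ s ∈ S, (w (Sum.inr (Sum.inl s)) • x s - w (Sum.inr (Sum.inr s)) • x s) := by
        refine Finset.sum_congr rfl fun s hs => ?_
        simp only [hνdef]
        rw [if_neg (hSnotT s hs), sub_smul]
      have hTpart : ∑ s ∈ T, ν s • x s
          = ∑ t ∈ T, p t • (lam t • x t) + lam tp • x tp := by
        have e1 : ∀ t ∈ T, ν t • x t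
            = p t • (lam t • x t) + (if t = tp then (1:ℝ) else 0) • (lam t • x t) := by
          intro t ht
          simp only [hνdef]
          rw [if_pos ht, add_mul, add_smul, mul_smul, mul_smul]
        rw [Finset.sum_congr rfl e1, Finset.sum_add_distrib]
        congr 1
        simp only [ite_smul, one_smul, zero_smul]
        rw [Finset.sum_ite_eq' T tp (fun t => lam t • x t), if_pos htpT]
      rw [hSpart, hTpart, Finset.sum_sub_distrib]
      have hthis := hsum2'
      simp only [smul_neg] at hthis
      rw [Finset.sum_neg_distrib] at hthis
      linear_combination hthis
    -- choose ε
    have htpTne : T.Nonempty := ⟨tp, htpT⟩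
    have hpnn : ∀ t, 0 ≤ p t := fun t => hw _
    obtain ⟨ε1, hε1pos, hε1le⟩ : ∃ e : ℝ, 0 < e ∧
        ∀ s ∈ S, e ≤ (1 - |lam s|) / (|ν s| + 1) := by
      by_cases h : S.Nonempty
      · refine ⟨S.inf' h (fun s => (1 - |lam s|) / (|ν s| + 1)), ?_, fun s hs => Finset.inf'_le _ hs⟩
        rw [Finset.lt_inf'_iff]
        intro s hs
        have h1 : |lam s| < 1 := (Finset.mem_filter.mp hs).2
        have h2 : (0:ℝ) < |ν s| + 1 := by positivity
        exact div_pos (by linarith) h2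
      · exact ⟨1, one_pos, fun s hs => absurd ⟨s, hs⟩ h⟩
    obtain ⟨ε2, hε2pos, hε2le⟩ : ∃ e : ℝ, 0 < e ∧ ∀ t ∈ T, e ≤ 1 / (p t + 2) := by
      refine ⟨T.inf' htpTne (fun t => 1 / (p t + 2)), ?_, fun t ht => Finset.inf'_le _ ht⟩
      rw [Finset.lt_inf'_iff]
      intro t _
      have := hpnn t
      positivity
    set ε : ℝ := min ε1 ε2 with hεdef
    have hεpos : 0 < ε := lt_min hε1pos hε2pos
    have hεS : ∀ s ∈ S, ε * |ν s| ≤ 1 - |lam s| := by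
      intro s hs
      have hle : ε ≤ (1 - |lam s|) / (|ν s| + 1) := (min_le_left _ _).trans (hε1le s hs)
      have h2 : (0:ℝ) < |ν s| + 1 := by positivity
      calc ε * |ν s| ≤ ((1 - |lam s|) / (|ν s| + 1)) * (|ν s| + 1) := by
            have h1 : |lam s| < 1 := (Finset.mem_filter.mp hs).2
            apply mul_le_mul hle (by linarith) (abs_nonneg _)
              (div_nonneg (by linarith) (by positivity))
        _ = 1 - |lam s| := div_mul_cancel₀ _ h2.ne'
    have hεT : ∀ t ∈ T, ε * (p t + (if t = tp then (1:ℝ) else 0)) ≤ 1 := by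
      intro t ht
      have hle : ε ≤ 1 / (p t + 2) := (min_le_right _ _).trans (hε2le t ht)
      have hp2 : (0:ℝ) < p t + 2 := by linarith [hpnn t]
      have hle2 : p t + (if t = tp then (1:ℝ) else 0) ≤ p t + 2 := by
        split_ifs <;> linarith
      have hnn : (0:ℝ) ≤ p t + (if t = tp then (1:ℝ) else 0) := by
        split_ifs <;> linarith [hpnn t]
      calc ε * (p t + (if t = tp then (1:ℝ) else 0)) ≤ (1 / (p t + 2)) * (p t + 2) := by
            apply mul_le_mul hle hle2 hnn (by positivity)
        _ = 1 := one_div_mul_cancel hp2.ne'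
    -- the perturbed multiplier
    set μ : Fin N → ℝ := fun s => lam s - ε * ν s with hμdef
    have hμT : ∀ t ∈ T, μ t = lam t * (1 - ε * (p t + if t = tp then (1:ℝ) else 0)) := by
      intro t ht
      simp only [hμdef, hνdef]
      rw [if_pos ht]
      ring
    have hμFeas : Feas μ := by
      constructor
      · intro s hs
        by_cases hsltS : |lam s| < 1
        · have hsS : s ∈ S := Finset.mem_filter.mpr ⟨hs, hsltS⟩
          have h1 := hεS s hsS
          have h2 : |μ s| ≤ |lam s| + ε * |ν s| := by
            simp only [hμdef]
            calc |lam s - ε * ν s| ≤ |lam s| + |ε * ν s| := abs_sub _ _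
              _ = |lam s| + ε * |ν s| := by rw [abs_mul, abs_of_pos hεpos]
          linarith
        · have hsT : s ∈ T := Finset.mem_filter.mpr ⟨hs, hsltS⟩
          rw [hμT s hsT, abs_mul, hT1 s hsT, one_mul]
          have h1 := hεT s hsT
          have hnn : (0:ℝ) ≤ ε * (p s + if s = tp then (1:ℝ) else 0) := by
            apply mul_nonneg hεpos.le
            split_ifs <;> linarith [hpnn s]
          rw [abs_of_nonneg (by linarith)]
          linarith
      · have : ∑ s ∈ I0, μ s • x s = ∑ s ∈ I0, lam s • x s - ε • ∑ s ∈ I0, ν s • x s := by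
          rw [Finset.smul_sum, ← Finset.sum_sub_distrib]
          refine Finset.sum_congr rfl fun s _ => ?_
          simp only [hμdef]
          rw [sub_smul, smul_smul]
        rw [this, hν0, smul_zero, sub_zero, ← hlam_eq]
    have hμtp : |μ tp| < 1 := by
      rw [hμT tp htpT, if_pos rfl, abs_mul, hT1 tp htpT, one_mul]
      have h1 := hεT tp htpT
      rw [if_pos rfl] at h1
      have h2 : 0 < ε * (p tp + 1) := by
        apply mul_pos hεpos
        linarith [hpnn tp]
      rw [abs_of_nonneg (by linarith)]
      linarith
    have : |lam tp| < 1 := hiff' tp htpI0 ⟨μ, hμFeas, hμtp⟩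
    exact (Finset.mem_filter.mp htpT).2 this
  · -- the separating direction contradicts positivity of g
    have hS0 : ∀ s ∈ S, x s ⬝ᵥ v = 0 := by
      intro s hs
      have h1 := hvle (Sum.inr (Sum.inl s)) (by simp [hG2, hs])
      have h2 := hvle (Sum.inr (Sum.inr s)) (by simp [hG2, hs])
      rw [hz2, Sum.elim_inr, Sum.elim_inl] at h1
      rw [hz2, Sum.elim_inr, Sum.elim_inr, neg_dotProduct] at h2
      linarith
    have hT0 : ∀ t ∈ T, lam t * (x t ⬝ᵥ v) ≤ 0 := by
      intro t ht
      have h1 := hvle (Sum.inl t) (by simp [hG2, ht])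
      rw [hz2, Sum.elim_inl, smul_dotProduct, smul_eq_mul] at h1
      exact h1
    have hvne : v ≠ 0 := by
      intro h0
      rw [h0, dotProduct_zero] at hvpos
      exact lt_irrefl 0 hvpos
    have hgv := hg v hvne
    rw [hsplit v] at hgv
    have hSzero' : ∑ u ∈ S, (lam u * (x u ⬝ᵥ v) + |x u ⬝ᵥ v|) = 0 := by
      refine Finset.sum_eq_zero fun u hu => ?_
      rw [hS0 u hu]
      simp
    have hTzero' : ∑ u ∈ T, (lam u * (x u ⬝ᵥ v) + |x u ⬝ᵥ v|) = 0 := by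
      refine Finset.sum_eq_zero fun u hu => ?_
      have h1 := hT0 u hu
      have h2 : |lam u * (x u ⬝ᵥ v)| = |x u ⬝ᵥ v| := by
        rw [abs_mul, hT1 u hu, one_mul]
      have h3 : lam u * (x u ⬝ᵥ v) = -|x u ⬝ᵥ v| := by
        rw [← h2, abs_of_nonpos h1]
        ring
      rw [h3]
      ring
    rw [hSzero', hTzero'] at hgv
    linarith

lemma backward (n N : ℕ) (x : Fin N → Fin n → ℝ) (y : Fin N → ℝ) (θs : Fin n → ℝ)
    (lam : Fin N → ℝ)
    (hbdd : ∀ t ∈ univ.filter (fun t => x t ⬝ᵥ θs = y t), |lam t| ≤ 1)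
    (heq : cvec n N x y θs = ∑ t ∈ univ.filter (fun t => x t ⬝ᵥ θs = y t), lam t • x t)
    (hspan : Submodule.span ℝ (x ''
      ↑((univ.filter (fun t => x t ⬝ᵥ θs = y t)).filter (fun t => |lam t| < 1))) = ⊤) :
    ∀ θ : Fin n → ℝ, θ ≠ θs → (∑ t, |y t - x t ⬝ᵥ θs|) < ∑ t, |y t - x t ⬝ᵥ θ| := by
  intro θ hθ
  have hdne : θ - θs ≠ 0 := sub_ne_zero.mpr hθ
  set d : Fin n → ℝ := θ - θs with hd
  set I0 : Finset (Fin N) := univ.filter (fun t => x t ⬝ᵥ θs = y t) with hI0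
  set S : Finset (Fin N) := I0.filter (fun t => |lam t| < 1) with hS
  obtain ⟨t0, ht0S, ht0⟩ : ∃ t ∈ S, x t ⬝ᵥ d ≠ 0 := by
    by_contra hcon
    push_neg at hcon
    exact hdne (dot_eq_zero_of_span_top n N x S hspan d hcon)
  have hgpos : 0 < gfun n N x y θs d := by
    rw [gfun, ← hI0, heq, sum_dot]
    simp only [smul_dotProduct, smul_eq_mul]
    rw [← Finset.sum_add_distrib]
    refine Finset.sum_pos' (fun t ht => ?_) ⟨t0, Finset.mem_of_mem_filter _ ht0S, ?_⟩
    · have hlam := hbdd t ht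
      have h1 : |lam t * (x t ⬝ᵥ d)| ≤ |x t ⬝ᵥ d| := by
        rw [abs_mul]
        exact mul_le_of_le_one_left (abs_nonneg _) hlam
      have h2 := neg_abs_le (lam t * (x t ⬝ᵥ d))
      linarith
    · have hlt : |lam t0| < 1 := (Finset.mem_filter.mp ht0S).2
      have hpos : 0 < |x t0 ⬝ᵥ d| := abs_pos.mpr ht0
      have h1 : |lam t0| * |x t0 ⬝ᵥ d| < |x t0 ⬝ᵥ d| := mul_lt_of_lt_one_left hpos hlt
      have h2 := neg_abs_le (lam t0 * (x t0 ⬝ᵥ d))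
      rw [abs_mul] at h2
      linarith
  have hlb := lb n N x y θs θ
  rw [← hd] at hlb
  linarith

theorem stmt4 (n N : ℕ) (hn : 1 ≤ n) (hN : 1 ≤ N)
    (x : Fin N → Fin n → ℝ) (y : Fin N → ℝ) (θs : Fin n → ℝ) :
    (∀ θ : Fin n → ℝ, θ ≠ θs → ∑ t, |y t - x t ⬝ᵥ θs| < ∑ t, |y t - x t ⬝ᵥ θ|) ↔
      (∃ lam : Fin N → ℝ,
        (∀ t ∈ univ.filter (fun t => x t ⬝ᵥ θs = y t), lam t ∈ Set.Icc (-1 : ℝ) 1) ∧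
        (∑ t ∈ univ.filter (fun t => x t ⬝ᵥ θs > y t), x t)
          - (∑ t ∈ univ.filter (fun t => x t ⬝ᵥ θs < y t), x t)
          = (∑ t ∈ univ.filter (fun t => x t ⬝ᵥ θs = y t), lam t • x t) ∧
        (colSub n N x
          ((univ.filter (fun t => x t ⬝ᵥ θs = y t)).filter (fun t => |lam t| < 1))).rank
          = n) := by
  constructor
  · intro huniq
    obtain ⟨lam, hbdd, heq, hspan⟩ := forward_span n N hn x y θs (gpos n N x y θs huniq)
    refine ⟨lam, fun t ht => Set.mem_Icc.mpr (abs_le.mp (hbdd t ht)), heq, ?_⟩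
    rw [rank_colSub_iff]
    exact hspan
  · rintro ⟨lam, hIcc, heq, hrank⟩
    exact backward n N x y θs lam
      (fun t ht => abs_le.mpr (Set.mem_Icc.mp (hIcc t ht))) heq
      ((rank_colSub_iff n N x _).mp hrank)
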